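/- For any sequence ⟨x_n⟩ in a semigroup (S,·), the set ⋂_{m≥1} cl FP(⟨x_n⟩_{n≥m}) is a compact subsemigroup of βS; in particular it contains an idempotent. -/

import Mathlib

attribute [local instance] Ultrafilter.semigroup

/-- For any sequence `a` in a semigroup `S`, the set
`⋂_m cl FP(⟨a_n⟩_{n≥m}) = ⋂_m {p ∈ βS : FP(a.drop m) ∈ p}` is a compact
subsemigroup of `βS`; in particular it contains an idempotent. -/
theorem inter_clFP_compact_subsemigroup {S : Type*} [Semigroup S] (a : Stream' S) :
    IsCompact (⋂ m : ℕ, {p : Ultrafilter S | Hindman.FP (a.drop m) ∈ p}) ∧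
      (∀ p ∈ ⋂ m : ℕ, {p : Ultrafilter S | Hindman.FP (a.drop m) ∈ p},
        ∀ q ∈ ⋂ m : ℕ, {p : Ultrafilter S | Hindman.FP (a.drop m) ∈ p},
          p * q ∈ ⋂ m : ℕ, {p : Ultrafilter S | Hindman.FP (a.drop m) ∈ p}) ∧
      ∃ p ∈ ⋂ m : ℕ, {p : Ultrafilter S | Hindman.FP (a.drop m) ∈ p}, p * p = p := by
  set T : Set (Ultrafilter S) := ⋂ m : ℕ, {p : Ultrafilter S | Hindman.FP (a.drop m) ∈ p} with hT
  have hclosed : IsClosed T :=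
    isClosed_iInter fun i => ultrafilter_isClosed_basic _
  have hcompact : IsCompact T := hclosed.isCompact
  have hmul : ∀ p ∈ T, ∀ q ∈ T, p * q ∈ T := by
    intro U hU V hV
    rw [hT, Set.mem_iInter] at *
    intro n
    show ∀ᶠ m in ↑(U * V), m ∈ Hindman.FP (a.drop n)
    rw [Ultrafilter.eventually_mul]
    filter_upwards [hU n] with m hm
    obtain ⟨n', hn⟩ := Hindman.FP.mul hm
    filter_upwards [hV (n' + n)] with m' hm'
    apply hn
    simpa only [Stream'.drop_drop, add_comm] using hm'
  refine ⟨hcompact, hmul, ?_⟩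
  have hne : T.Nonempty := by
    apply IsCompact.nonempty_iInter_of_sequence_nonempty_isCompact_isClosed
    · intro n U hU
      simp only [Set.mem_setOf_eq] at hU ⊢
      filter_upwards [hU]
      rw [← Stream'.drop_drop, ← Stream'.tail_eq_drop]
      exact Hindman.FP.tail _
    · intro n
      exact ⟨pure _, Ultrafilter.mem_pure.mpr <| Hindman.FP.head _⟩
    · exact (ultrafilter_isClosed_basic _).isCompact
    · intro n
      apply ultrafilter_isClosed_basic
  obtain ⟨U, hU, hidem⟩ :=
    exists_idempotent_in_compact_subsemigroup Ultrafilter.continuous_mul_left T hne hcompact hmul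
  exact ⟨U, hU, hidem⟩
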